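/- For every n ≥ 0, the element W_n does not belong to the right ℤ[H]-submodule of ℤ[H] ⊕ ℤ[H] generated by W₀, W₁, …, W_{n−1}; consequently, the right submodules E_n generated by {W₀, …, W_{n−1}} form a strictly increasing chain E₀ ⊊ E₁ ⊊ E₂ ⊊ ⋯. -/

import Mathlib

open Finsupp Multiplicative

/-- The shift automorphism of the free abelian group `ℤ →₀ ℤ`, sending the basis element
`single n 1` (i.e. `x_n`) to `single (n + 1) 1` (i.e. `x_{n+1}`). -/
noncomputable def shiftAut : Multiplicative (ℤ →₀ ℤ) ≃* Multiplicative (ℤ →₀ ℤ) :=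
  AddEquiv.toMultiplicative (Finsupp.domCongr (Equiv.addRight (1 : ℤ)))

/-- The action of `ℤ` on the free abelian group `ℤ →₀ ℤ` by shifting. -/
noncomputable def shiftHom : Multiplicative ℤ →* MulAut (Multiplicative (ℤ →₀ ℤ)) :=
  zpowersHom _ (shiftAut : MulAut (Multiplicative (ℤ →₀ ℤ)))

/-- The wreath product `H = ℤ ≀ ℤ`: the semidirect product of the free abelian group `N`
with basis `{x_n : n ∈ ℤ}` (multiplicative `ℤ →₀ ℤ`) by an infinite cyclic group `⟨t⟩`,
where conjugation by `t` sends `x_n` to `x_{n+1}`. -/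
noncomputable abbrev Hgrp : Type :=
  Multiplicative (ℤ →₀ ℤ) ⋊[shiftHom] Multiplicative ℤ

/-- The element `x_n = tⁿ x t⁻ⁿ` of `H`. -/
noncomputable def xE (n : ℤ) : Hgrp :=
  SemidirectProduct.inl (Multiplicative.ofAdd (Finsupp.single n 1))

/-- The element `t` of `H`. -/
noncomputable def tE : Hgrp :=
  SemidirectProduct.inr (Multiplicative.ofAdd 1)

/-- The integral group ring `ℤ[H]`. -/
noncomputable abbrev Agr : Type := MonoidAlgebra ℤ Hgrp

/-- The element `x_i ∈ ℤ[H]`. -/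
noncomputable def XA (i : ℤ) : Agr := MonoidAlgebra.of ℤ Hgrp (xE i)

/-- The element `t ∈ ℤ[H]`. -/
noncomputable def TA : Agr := MonoidAlgebra.of ℤ Hgrp tE

/-- `y_i = 1 - x_i`. -/
noncomputable def yA (i : ℤ) : Agr := 1 - XA i

/-- `z_i = x_{i-1} - x_i`. -/
noncomputable def zA (i : ℤ) : Agr := XA (i - 1) - XA i

/-- The product `y₀ y₋₁ ⋯ y_k` (equal to `1` when `k > 0`). -/
noncomputable def yProd (k : ℤ) : Agr :=
  ((List.range (1 - k).toNat).map (fun i => yA (-(i : ℤ)))).prod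

/-- `U_n = z_{−n} − t^{n+1} z₁ y₀ y₋₁ ⋯ y₋ₙ`. -/
noncomputable def UU (n : ℕ) : Agr :=
  zA (-(n : ℤ)) - TA ^ (n + 1) * zA 1 * yProd (-(n : ℤ))

/-- `V_n = z_{−n} + Σ_{i=1}^{n} tⁱ z_{−n} z₁ y₀ y₋₁ ⋯ y_{2−i} − t^{n+1} z₁ y₀ ⋯ y_{1−n} y_{−1−n}`. -/
noncomputable def VV (n : ℕ) : Agr :=
  zA (-(n : ℤ)) + (∑ i ∈ Finset.Icc 1 n, TA ^ i * zA (-(n : ℤ)) * zA 1 * yProd (2 - (i : ℤ)))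
    - TA ^ (n + 1) * zA 1 * yProd (1 - (n : ℤ)) * yA (-1 - (n : ℤ))

/-- `W_n = (U_n, V_n) ∈ ℤ[H] ⊕ ℤ[H]`. -/
noncomputable def WW (n : ℕ) : Agr × Agr := (UU n, VV n)

/-- `1 − t + t x ∈ ℤ[H]`. -/
noncomputable def aElt : Agr := 1 - TA + TA * XA 0

/-- `1 − t + t² x t⁻¹ ∈ ℤ[H]`. -/
noncomputable def bElt : Agr := 1 - TA + MonoidAlgebra.of ℤ Hgrp (tE ^ 2 * xE 0 * tE⁻¹)

/-- The homomorphism of right `ℤ[H]`-modules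
`f(U, V) = (1 − t + t x)·U − (1 − t + t² x t⁻¹)·V`;
right `ℤ[H]`-modules are `ℤ[H]ᵐᵒᵖ`-modules. -/
noncomputable def fMap : (Agr × Agr) →ₗ[Agrᵐᵒᵖ] Agr where
  toFun p := aElt * p.1 - bElt * p.2
  map_add' v w := by
    simp only [Prod.fst_add, Prod.snd_add, mul_add]
    abel
  map_smul' c v := by
    simp only [Prod.smul_fst, Prod.smul_snd, MulOpposite.smul_eq_mul_unop, RingHom.id_apply]
    rw [sub_mul, mul_assoc, mul_assoc]

/-- `W_n` never lies in the right `ℤ[H]`-submodule `E_n` of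
`ℤ[H] ⊕ ℤ[H]` generated by `W₀, …, W_{n−1}`; consequently the chain `E₀ ⊊ E₁ ⊊ ⋯` is
strictly increasing. -/
lemma left_x_mul (j : ℤ) (h : Hgrp) (c : ℤ) (hj : j ≠ c) :
    Multiplicative.toAdd ((xE j * h).left) c = Multiplicative.toAdd h.left c := by
  rw [xE, SemidirectProduct.mul_left, SemidirectProduct.left_inl,
    SemidirectProduct.right_inl, map_one, MulAut.one_apply, toAdd_mul]
  rw [Finsupp.add_apply, toAdd_ofAdd, Finsupp.single_apply, if_neg hj, zero_add]

lemma left_t_mul (h : Hgrp) (c : ℤ) :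
    Multiplicative.toAdd ((tE * h).left) c = Multiplicative.toAdd h.left (c - 1) := by
  rw [tE, SemidirectProduct.mul_left, SemidirectProduct.left_inr,
    SemidirectProduct.right_inr, one_mul]
  show Multiplicative.toAdd ((shiftHom (ofAdd 1)) h.left) c = _
  simp only [shiftHom, zpowersHom_apply, toAdd_ofAdd, zpow_one]
  show (Finsupp.domCongr (Equiv.addRight (1:ℤ)) (Multiplicative.toAdd h.left)) c = _
  rw [Finsupp.domCongr_apply, Finsupp.equivMapDomain_apply]
  norm_num [sub_eq_add_neg]

noncomputable def lamc (c : ℤ) : Agr →+ ℤ :=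
  (Finsupp.liftAddHom (fun g : Hgrp => AddMonoidHom.mulRight ((Multiplicative.toAdd g.left) c))).comp
    MonoidAlgebra.coeffAddEquiv.toAddMonoidHom

lemma lamc_apply (c : ℤ) (w : Agr) :
    lamc c w = w.coeff.sum (fun g k => k * (Multiplicative.toAdd g.left) c) := by
  rfl

lemma lamc_single (c : ℤ) (g : Hgrp) (k : ℤ) :
    lamc c (MonoidAlgebra.single g k) = k * (Multiplicative.toAdd g.left) c := by
  exact Finsupp.liftAddHom_apply_single _ _ _

lemma lamc_single_one_mul (c : ℤ) (g : Hgrp) (w : Agr) :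
    lamc c (MonoidAlgebra.single g 1 * w)
      = w.coeff.sum (fun h k => k * (Multiplicative.toAdd (g * h).left) c) := by
  induction w using MonoidAlgebra.induction with
  | zero => simp
  | single_add h k f hf hk ih =>
      rw [mul_add, map_add, ih, MonoidAlgebra.coeff_add, Finsupp.sum_add_index (by intro a _; simp) (by intro a _ b1 b2; ring)]
      congr 1
      rw [show (MonoidAlgebra.single g 1 : Agr) * MonoidAlgebra.single h k
            = MonoidAlgebra.single (g * h) k by rw [MonoidAlgebra.single_mul_single, one_mul]]
      rw [lamc_single, MonoidAlgebra.coeff_single, Finsupp.sum_single_index (by simp)]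

lemma lamc_X_mul (c j : ℤ) (hj : j ≠ c) (w : Agr) :
    lamc c (XA j * w) = lamc c w := by
  rw [XA, MonoidAlgebra.of_apply, lamc_single_one_mul, lamc_apply]
  exact Finsupp.sum_congr (fun h _ => by rw [left_x_mul j h c hj])

lemma lamc_T_mul (c : ℤ) (w : Agr) :
    lamc c (TA * w) = lamc (c - 1) w := by
  rw [TA, MonoidAlgebra.of_apply, lamc_single_one_mul, lamc_apply]
  exact Finsupp.sum_congr (fun h _ => by rw [left_t_mul h c])

lemma lamc_Tpow_mul (c : ℤ) (m : ℕ) (w : Agr) :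
    lamc c (TA ^ m * w) = lamc (c - m) w := by
  induction m generalizing c with
  | zero => simp
  | succ m ih =>
      rw [pow_succ', mul_assoc, lamc_T_mul, ih]
      congr 1
      push_cast; ring

lemma lamc_z_mul (c j : ℤ) (h1 : j - 1 ≠ c) (h2 : j ≠ c) (w : Agr) :
    lamc c ((XA (j-1) - XA j) * w) = 0 := by
  rw [sub_mul, map_sub, lamc_X_mul c _ h1, lamc_X_mul c _ h2, sub_self]

lemma lamc_X (c j : ℤ) : lamc c (XA j) = if j = c then 1 else 0 := by
  rw [XA, MonoidAlgebra.of_apply, lamc_single, one_mul, xE, SemidirectProduct.left_inl,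
    toAdd_ofAdd, Finsupp.single_apply]

lemma lamc_zA_mul (c j : ℤ) (h1 : j - 1 ≠ c) (h2 : j ≠ c) (w : Agr) :
    lamc c (zA j * w) = 0 := by
  rw [zA]; exact lamc_z_mul c j h1 h2 w

lemma lamc_UU_mul (n i : ℕ) (hi : i < n) (r : Agr) :
    lamc (-(n:ℤ) - 1) (UU i * r) = 0 := by
  have hiz : (i:ℤ) < (n:ℤ) := by exact_mod_cast hi
  rw [UU, sub_mul, map_sub, lamc_zA_mul _ _ (by omega) (by omega)]
  rw [mul_assoc, mul_assoc, lamc_Tpow_mul, lamc_zA_mul _ _ (by push_cast; omega) (by push_cast; omega), sub_self]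

lemma lamc_UU_self (n : ℕ) : lamc (-(n:ℤ) - 1) (UU n) = 1 := by
  rw [UU, map_sub, mul_assoc, lamc_Tpow_mul,
    lamc_zA_mul _ _ (by push_cast; omega) (by push_cast; omega), sub_zero, zA, map_sub,
    lamc_X, lamc_X, if_pos rfl, if_neg (by omega), sub_zero]

theorem w_not_mem (n : ℕ) :
    WW n ∉ Submodule.span Agrᵐᵒᵖ {w : Agr × Agr | ∃ i < n, w = WW i} := by
  intro hmem
  have hU : UU n ∈ Submodule.span Agrᵐᵒᵖ
      ((LinearMap.fst Agrᵐᵒᵖ Agr Agr) '' {w : Agr × Agr | ∃ i < n, w = WW i}) := by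
    rw [← Submodule.map_span]
    exact Submodule.mem_map_of_mem hmem
  have hP : ∀ r : Agr, lamc (-(n:ℤ) - 1) (UU n * r) = 0 := by
    refine Submodule.span_induction
      (p := fun v _ => ∀ r : Agr, lamc (-(n:ℤ) - 1) (v * r) = 0) ?_ ?_ ?_ ?_ hU
    · rintro v ⟨w, ⟨i, hi, rfl⟩, rfl⟩ r
      exact lamc_UU_mul n i hi r
    · intro r; rw [zero_mul, map_zero]
    · intro x y _ _ hx hy r; rw [add_mul, map_add, hx, hy, add_zero]
    · intro a x _ hx r
      rw [MulOpposite.smul_eq_mul_unop, mul_assoc]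
      exact hx _
  have h1 := hP 1
  rw [mul_one, lamc_UU_self] at h1
  exact one_ne_zero h1


theorem w_not_mem_span_previous :
    (∀ n : ℕ, WW n ∉ Submodule.span Agrᵐᵒᵖ {w : Agr × Agr | ∃ i < n, w = WW i}) ∧
    (∀ n : ℕ, Submodule.span Agrᵐᵒᵖ {w : Agr × Agr | ∃ i < n, w = WW i}
      < Submodule.span Agrᵐᵒᵖ {w : Agr × Agr | ∃ i < n + 1, w = WW i}) := by
  refine ⟨w_not_mem, fun n => ?_⟩
  refine lt_of_le_of_ne (Submodule.span_mono ?_) (fun heq => w_not_mem n ?_)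
  · rintro w ⟨i, hi, rfl⟩; exact ⟨i, Nat.lt_succ_of_lt hi, rfl⟩
  · rw [heq]
    exact Submodule.subset_span ⟨n, Nat.lt_succ_self n, rfl⟩
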